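/- Fix λ > 0, λ' > 0, μ > 0, set ρ' = λ/λ', ρ = μ/λ, δ = ρ'(ρ+ρ') − 1 and assume ρ'(ρ+ρ') ≥ 1. Let u, v : ℝ → ℂ be twice continuously differentiable on an open interval containing [0, ρ'], with u(0) = 0 and v(0) = 0. Then ∫_0^{ρ'} (Mu)(y) · conj(v(y)) · r(y) dy = ∫_0^{ρ'} u(y) · conj((Mv)(y)) · r(y) dy, i.e. the operator M is symmetric with respect to the inner product of L²((0, ρ'), r(y)dy). -/

import Mathlib

open MeasureTheory

/-- The restriction of the regularized Gribov operator to the negative imaginary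
axis: `(Mu)(y) = (λ'y² − λy)u''(y) + (λy² + μy)u'(y)`. -/
noncomputable def Mop (lam' lam μ : ℝ) (u : ℝ → ℂ) (y : ℝ) : ℂ :=
  ((lam' * y ^ 2 - lam * y : ℝ) : ℂ) * deriv (deriv u) y
    + ((lam * y ^ 2 + μ * y : ℝ) : ℂ) * deriv u y

/-- The weight `r(y) = y⁻¹ e^{ρ'y} (ρ' − y)^δ`. -/
noncomputable def rWeight (ρ' δ : ℝ) (y : ℝ) : ℝ :=
  y⁻¹ * Real.exp (ρ' * y) * (ρ' - y) ^ δ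

noncomputable def pSL (lam' ρ' δ : ℝ) (y : ℝ) : ℝ :=
  -lam' * ((ρ' - y) * (Real.exp (ρ' * y) * (ρ' - y) ^ δ))

noncomputable def pSL' (lam μ ρ' δ : ℝ) (y : ℝ) : ℝ :=
  (lam * y + μ) * (Real.exp (ρ' * y) * (ρ' - y) ^ δ)

lemma pSL_hasDerivAt (lam lam' μ ρ' ρ δ : ℝ) (hlam : 0 < lam) (hlam' : 0 < lam')
    (hρ' : ρ' = lam / lam') (hρ : ρ = μ / lam) (hδ : δ = ρ' * (ρ + ρ') - 1)
    {y : ℝ} (ht : 0 < ρ' - y) :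
    HasDerivAt (pSL lam' ρ' δ) (pSL' lam μ ρ' δ y) y := by
  have h1 : HasDerivAt (fun y : ℝ => ρ' - y) (-1) y := by
    simpa using (hasDerivAt_id y).const_sub ρ'
  have h2 : HasDerivAt (fun y : ℝ => Real.exp (ρ' * y)) (Real.exp (ρ' * y) * ρ') y := by
    simpa using ((hasDerivAt_id y).const_mul ρ').exp
  have h3 : HasDerivAt (fun y : ℝ => (ρ' - y) ^ δ) (δ * (ρ' - y) ^ (δ - 1) * (-1)) y :=
    (Real.hasDerivAt_rpow_const (p := δ) (Or.inl (ne_of_gt ht))).comp y h1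
  have h6 := (h1.mul (h2.mul h3)).const_mul (-lam')
  convert h6 using 1
  case e'_4 => rfl
  case e'_5 => rfl
  case e'_8 => rfl
  have hT : (ρ' - y) * (ρ' - y) ^ (δ - 1) = (ρ' - y) ^ δ := by
    rw [show (ρ' - y) * (ρ' - y) ^ (δ - 1) = (ρ' - y) ^ (1:ℝ) * (ρ' - y) ^ (δ - 1) by
      rw [Real.rpow_one], ← Real.rpow_add ht]
    ring_nf
  have hl : lam' * ρ' = lam := by rw [hρ']; field_simp
  have hm : lam * ρ = μ := by rw [hρ]; field_simp
  have hc : lam * y + μ = lam' * (1 + δ - ρ' * (ρ' - y)) := by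
    rw [hδ]; linear_combination -y * hl - ρ * hl - hm
  unfold pSL'
  rw [hc]
  simp only [Pi.mul_apply]
  linear_combination (-(lam' * Real.exp (ρ' * y) * δ)) * hT

lemma Mop_to_pform (lam lam' μ ρ' ρ δ : ℝ) (hlam : 0 < lam) (hlam' : 0 < lam')
    (hμ : 0 < μ) (hρ' : ρ' = lam / lam') (hρ : ρ = μ / lam)
    (hδ : δ = ρ' * (ρ + ρ') - 1) (hge : 1 ≤ ρ' * (ρ + ρ'))
    (u v : ℝ → ℂ) (a b : ℝ) (ha : a < 0) (hb : ρ' < b)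
    (hu : ContDiffOn ℝ 2 u (Set.Ioo a b)) (hv : ContDiffOn ℝ 2 v (Set.Ioo a b))
    (hv0 : v 0 = 0) :
    ∫ y in Set.Ioc (0 : ℝ) ρ',
        Mop lam' lam μ u y * (starRingEnd ℂ) (v y) * (rWeight ρ' δ y : ℂ)
      = - ∫ y in Set.Ioc (0 : ℝ) ρ',
          ((pSL lam' ρ' δ y : ℝ) : ℂ) * deriv u y * (starRingEnd ℂ) (deriv v y) := by
  have hρ'pos : 0 < ρ' := by rw [hρ']; positivity
  have hδ0 : 0 ≤ δ := by rw [hδ]; linarith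
  have hopen : IsOpen (Set.Ioo a b) := isOpen_Ioo
  have hsub : Set.Icc (0:ℝ) ρ' ⊆ Set.Ioo a b := fun y hy =>
    ⟨lt_of_lt_of_le ha hy.1, lt_of_le_of_lt hy.2 hb⟩
  -- smoothness facts
  have hu1 : ContDiffOn ℝ 1 (deriv u) (Set.Ioo a b) :=
    hu.deriv_of_isOpen hopen (m := 1) (by norm_num)
  have hv1 : ContDiffOn ℝ 1 (deriv v) (Set.Ioo a b) :=
    hv.deriv_of_isOpen hopen (m := 1) (by norm_num)
  have hud : ∀ y ∈ Set.Ioo a b, HasDerivAt u (deriv u y) y := fun y hy =>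
    ((hu.differentiableOn two_ne_zero).differentiableAt (hopen.mem_nhds hy)).hasDerivAt
  have hvd : ∀ y ∈ Set.Ioo a b, HasDerivAt v (deriv v y) y := fun y hy =>
    ((hv.differentiableOn two_ne_zero).differentiableAt (hopen.mem_nhds hy)).hasDerivAt
  have hudd : ∀ y ∈ Set.Ioo a b, HasDerivAt (deriv u) (deriv (deriv u) y) y := fun y hy =>
    ((hu1.differentiableOn one_ne_zero).differentiableAt (hopen.mem_nhds hy)).hasDerivAt
  have hcu' : ContinuousOn (deriv u) (Set.Ioo a b) := hu1.continuousOn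
  have hcv' : ContinuousOn (deriv v) (Set.Ioo a b) := hv1.continuousOn
  have hcu'' : ContinuousOn (deriv (deriv u)) (Set.Ioo a b) := by
    exact (hu1.deriv_of_isOpen hopen (m := 0) (by norm_num)).continuousOn
  -- continuity of p and p'
  have hcT : Continuous (fun y : ℝ => (ρ' - y) ^ δ) :=
    (Real.continuous_rpow_const hδ0).comp (continuous_const.sub continuous_id)
  have hcE : Continuous (fun y : ℝ => Real.exp (ρ' * y)) :=
    Real.continuous_exp.comp (continuous_const.mul continuous_id)
  have hcp : Continuous (pSL lam' ρ' δ) :=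
    continuous_const.mul ((continuous_const.sub continuous_id).mul (hcE.mul hcT))
  have hcp' : Continuous (pSL' lam μ ρ' δ) :=
    ((continuous_const.mul continuous_id).add continuous_const).mul (hcE.mul hcT)
  set F : ℝ → ℂ := fun y =>
    ((pSL lam' ρ' δ y : ℝ) : ℂ) * deriv u y * (starRingEnd ℂ) (v y) with hF
  set G : ℝ → ℂ := fun y =>
    (((pSL' lam μ ρ' δ y : ℝ) : ℂ) * deriv u y
        + ((pSL lam' ρ' δ y : ℝ) : ℂ) * deriv (deriv u) y) * (starRingEnd ℂ) (v y)
      + ((pSL lam' ρ' δ y : ℝ) : ℂ) * deriv u y * (starRingEnd ℂ) (deriv v y) with hG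
  have hFc : ContinuousOn F (Set.Icc 0 ρ') := by
    apply ContinuousOn.mul
    · exact ((Complex.continuous_ofReal.comp hcp).continuousOn.mul (hcu'.mono hsub))
    · exact Complex.continuous_conj.comp_continuousOn ((hv.continuousOn).mono hsub)
  have hGc : ContinuousOn G (Set.Icc 0 ρ') := by
    apply ContinuousOn.add
    · apply ContinuousOn.mul
      · exact ((Complex.continuous_ofReal.comp hcp').continuousOn.mul (hcu'.mono hsub)).add
          ((Complex.continuous_ofReal.comp hcp).continuousOn.mul (hcu''.mono hsub))
      · exact Complex.continuous_conj.comp_continuousOn ((hv.continuousOn).mono hsub)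
    · exact ((Complex.continuous_ofReal.comp hcp).continuousOn.mul (hcu'.mono hsub)).mul
        (Complex.continuous_conj.comp_continuousOn (hcv'.mono hsub))
  have hFderiv : ∀ y ∈ Set.Ioo (0:ℝ) ρ', HasDerivAt F (G y) y := by
    intro y hy
    have hyab : y ∈ Set.Ioo a b := hsub ⟨hy.1.le, hy.2.le⟩
    have hp := (pSL_hasDerivAt lam lam' μ ρ' ρ δ hlam hlam' hρ' hρ hδ
      (by linarith [hy.2] : 0 < ρ' - y)).ofReal_comp
    have hvs : HasDerivAt (fun t => (starRingEnd ℂ) (v t)) ((starRingEnd ℂ) (deriv v y)) y := by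
      simp only [starRingEnd_apply]
      exact (hvd y hyab).star
    exact ((hp.mul (hudd y hyab)).mul hvs)
  have hGint : IntervalIntegrable G volume 0 ρ' :=
    hGc.intervalIntegrable_of_Icc hρ'pos.le
  have heq0 : ∫ y in (0:ℝ)..ρ', G y = F ρ' - F 0 :=
    intervalIntegral.integral_eq_sub_of_hasDerivAt_of_le hρ'pos.le hFc hFderiv hGint
  have hFρ : F ρ' = 0 := by
    have h0 : pSL lam' ρ' δ ρ' = 0 := by unfold pSL; rw [sub_self]; ring
    simp only [hF, h0, Complex.ofReal_zero, zero_mul]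
  have hF0 : F 0 = 0 := by
    simp only [hF, hv0, map_zero, mul_zero]
  have hGzero : ∫ y in Set.Ioc (0:ℝ) ρ', G y = 0 := by
    rw [← intervalIntegral.integral_of_le hρ'pos.le, heq0, hFρ, hF0, sub_zero]
  -- identity of integrands on Ioc
  have hEq : Set.EqOn (fun y => Mop lam' lam μ u y * (starRingEnd ℂ) (v y) * (rWeight ρ' δ y : ℂ))
      (fun y => G y - ((pSL lam' ρ' δ y : ℝ) : ℂ) * deriv u y * (starRingEnd ℂ) (deriv v y))
      (Set.Ioc (0:ℝ) ρ') := by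
    intro y hy
    have hy0 : (y:ℝ) ≠ 0 := ne_of_gt hy.1
    have idp : pSL lam' ρ' δ y = (lam' * y ^ 2 - lam * y) * rWeight ρ' δ y := by
      have hl : lam' * ρ' = lam := by rw [hρ']; field_simp
      unfold pSL rWeight
      field_simp
      linear_combination (-((ρ' - y) ^ δ)) * hl
    have idp' : pSL' lam μ ρ' δ y = (lam * y ^ 2 + μ * y) * rWeight ρ' δ y := by
      unfold pSL' rWeight
      field_simp
    have e1 : ((pSL lam' ρ' δ y : ℝ) : ℂ)
        = ((lam' * y ^ 2 - lam * y : ℝ) : ℂ) * (rWeight ρ' δ y : ℂ) := by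
      rw [idp]; push_cast; ring
    have e2 : ((pSL' lam μ ρ' δ y : ℝ) : ℂ)
        = ((lam * y ^ 2 + μ * y : ℝ) : ℂ) * (rWeight ρ' δ y : ℂ) := by
      rw [idp']; push_cast; ring
    simp only [hG, Mop]
    rw [e1, e2]
    ring
  have hHint : IntegrableOn (fun y =>
      ((pSL lam' ρ' δ y : ℝ) : ℂ) * deriv u y * (starRingEnd ℂ) (deriv v y))
      (Set.Ioc (0:ℝ) ρ') volume := by
    apply (ContinuousOn.integrableOn_Icc ?_).mono_set Set.Ioc_subset_Icc_self
    exact ((Complex.continuous_ofReal.comp hcp).continuousOn.mul (hcu'.mono hsub)).mul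
      (Complex.continuous_conj.comp_continuousOn (hcv'.mono hsub))
  have hGIoc : IntegrableOn G (Set.Ioc (0:ℝ) ρ') volume :=
    (hGc.integrableOn_Icc).mono_set Set.Ioc_subset_Icc_self
  rw [setIntegral_congr_fun measurableSet_Ioc hEq, integral_sub hGIoc hHint, hGzero, zero_sub]

/-- If `ρ'(ρ + ρ') ≥ 1`, the operator `M` is symmetric with respect to the
inner product of `L²((0, ρ'), r(y)dy)` on twice continuously differentiable
functions vanishing at `0`. -/
theorem Mop_symmetric (lam lam' μ : ℝ) (hlam : 0 < lam) (hlam' : 0 < lam')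
    (hμ : 0 < μ) (ρ' ρ δ : ℝ) (hρ' : ρ' = lam / lam') (hρ : ρ = μ / lam)
    (hδ : δ = ρ' * (ρ + ρ') - 1) (hge : 1 ≤ ρ' * (ρ + ρ'))
    (u v : ℝ → ℂ) (a b : ℝ) (ha : a < 0) (hb : ρ' < b)
    (hu : ContDiffOn ℝ 2 u (Set.Ioo a b)) (hv : ContDiffOn ℝ 2 v (Set.Ioo a b))
    (hu0 : u 0 = 0) (hv0 : v 0 = 0) :
    ∫ y in Set.Ioc (0 : ℝ) ρ',
        Mop lam' lam μ u y * (starRingEnd ℂ) (v y) * (rWeight ρ' δ y : ℂ)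
      = ∫ y in Set.Ioc (0 : ℝ) ρ',
          u y * (starRingEnd ℂ) (Mop lam' lam μ v y) * (rWeight ρ' δ y : ℂ) := by
  have h1 := Mop_to_pform lam lam' μ ρ' ρ δ hlam hlam' hμ hρ' hρ hδ hge u v a b ha hb hu hv hv0
  have h2 := Mop_to_pform lam lam' μ ρ' ρ δ hlam hlam' hμ hρ' hρ hδ hge v u a b ha hb hv hu hu0
  calc (∫ y in Set.Ioc (0:ℝ) ρ',
          Mop lam' lam μ u y * (starRingEnd ℂ) (v y) * (rWeight ρ' δ y : ℂ))
      = - ∫ y in Set.Ioc (0:ℝ) ρ',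
          ((pSL lam' ρ' δ y : ℝ):ℂ) * deriv u y * (starRingEnd ℂ) (deriv v y) := h1
    _ = - ∫ y in Set.Ioc (0:ℝ) ρ',
          (starRingEnd ℂ) (((pSL lam' ρ' δ y : ℝ):ℂ) * deriv v y
            * (starRingEnd ℂ) (deriv u y)) := by
        congr 1
        apply setIntegral_congr_fun measurableSet_Ioc
        intro y _
        simp only [map_mul, Complex.conj_conj, Complex.conj_ofReal]
        ring
    _ = (starRingEnd ℂ) (- ∫ y in Set.Ioc (0:ℝ) ρ',
          ((pSL lam' ρ' δ y : ℝ):ℂ) * deriv v y * (starRingEnd ℂ) (deriv u y)) := by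
        rw [integral_conj, map_neg]
    _ = (starRingEnd ℂ) (∫ y in Set.Ioc (0:ℝ) ρ',
          Mop lam' lam μ v y * (starRingEnd ℂ) (u y) * (rWeight ρ' δ y : ℂ)) := by
        rw [← h2]
    _ = ∫ y in Set.Ioc (0:ℝ) ρ',
          (starRingEnd ℂ) (Mop lam' lam μ v y * (starRingEnd ℂ) (u y)
            * (rWeight ρ' δ y : ℂ)) := integral_conj.symm
    _ = ∫ y in Set.Ioc (0:ℝ) ρ',
          u y * (starRingEnd ℂ) (Mop lam' lam μ v y) * (rWeight ρ' δ y : ℂ) := by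
        apply setIntegral_congr_fun measurableSet_Ioc
        intro y _
        simp only [map_mul, Complex.conj_conj, Complex.conj_ofReal]
        ring
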